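/- Let α = (α₁, α₂, α₃) ∈ ℕ³ be a multi-index and let k ∈ ℤ be such that m := |α| + 2k + 1 ≥ 1, where |α| = α₁ + α₂ + α₃, and let f : ℝ³ ∖ {0} → ℝ be defined by f(ζ) = ζ₁^{α₁} ζ₂^{α₂} ζ₃^{α₃} · ‖ζ‖^{2k−1}. Then the m-th iterated Fréchet derivative of f satisfies, for every ζ ∈ ℝ³ ∖ {0}, every t > 0 and all vectors v₁, …, v_m ∈ ℝ³: (i) D^m f(−ζ)(v₁, …, v_m) = −D^m f(ζ)(v₁, …, v_m), i.e. D^m f is an odd function of ζ, and (ii) D^m f(tζ)(v₁, …, v_m) = t^{−2} D^m f(ζ)(v₁, …, v_m), i.e. D^m f is positively homogeneous of degree −2 with respect to ζ. -/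

import Mathlib

open Set

private lemma contDiffAt_zpow' {j : ℤ} {x : ℝ} (hx : x ≠ 0) {n : ℕ∞} :
    ContDiffAt ℝ n (fun x : ℝ => x ^ j) x := by
  cases j with
  | ofNat p => simpa using (contDiff_id.pow p).contDiffAt (𝕜 := ℝ)
  | negSucc p =>
    simp only [zpow_negSucc]
    exact ((contDiff_id (𝕜 := ℝ)).pow (p + 1)).contDiffAt.inv (pow_ne_zero _ hx)

private lemma contDiffOn_f (α : Fin 3 → ℕ) (k : ℤ) {n : ℕ∞}
    (f : EuclideanSpace ℝ (Fin 3) → ℝ)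
    (hf : ∀ ζ : EuclideanSpace ℝ (Fin 3),
      f ζ = ζ 0 ^ α 0 * ζ 1 ^ α 1 * ζ 2 ^ α 2 * ‖ζ‖ ^ (2 * k - 1)) :
    ContDiffOn ℝ n f {(0 : EuclideanSpace ℝ (Fin 3))}ᶜ := by
  intro ζ hζ
  have hζ0 : ζ ≠ 0 := hζ
  have h0 : ContDiffAt ℝ n (fun ζ : EuclideanSpace ℝ (Fin 3) => ζ 0 ^ α 0) ζ :=
    ((EuclideanSpace.proj (𝕜 := ℝ) (0 : Fin 3)).contDiff.contDiffAt).pow _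
  have h1 : ContDiffAt ℝ n (fun ζ : EuclideanSpace ℝ (Fin 3) => ζ 1 ^ α 1) ζ :=
    ((EuclideanSpace.proj (𝕜 := ℝ) (1 : Fin 3)).contDiff.contDiffAt).pow _
  have h2 : ContDiffAt ℝ n (fun ζ : EuclideanSpace ℝ (Fin 3) => ζ 2 ^ α 2) ζ :=
    ((EuclideanSpace.proj (𝕜 := ℝ) (2 : Fin 3)).contDiff.contDiffAt).pow _
  have h3 : ContDiffAt ℝ n (fun ζ : EuclideanSpace ℝ (Fin 3) => ‖ζ‖ ^ (2 * k - 1)) ζ :=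
    (contDiffAt_zpow' (norm_ne_zero_iff.2 hζ0)).comp ζ (contDiffAt_norm ℝ hζ0)
  have := ((h0.mul h1).mul h2).mul h3
  exact (this.congr_of_eventuallyEq (by filter_upwards with x using (hf x))).contDiffWithinAt

private lemma key_hom (m : ℕ) (f : EuclideanSpace ℝ (Fin 3) → ℝ)
    (hfd : ContDiffOn ℝ (m : ℕ∞) f {(0 : EuclideanSpace ℝ (Fin 3))}ᶜ)
    (c : ℝ) (hc : c ≠ 0) (A : ℝ)
    (hA : ∀ ζ : EuclideanSpace ℝ (Fin 3), f (c • ζ) = A * f ζ)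
    (ζ : EuclideanSpace ℝ (Fin 3)) (hζ : ζ ≠ 0)
    (v : Fin m → EuclideanSpace ℝ (Fin 3)) :
    c ^ m * iteratedFDeriv ℝ m f (c • ζ) v = A * iteratedFDeriv ℝ m f ζ v := by
  classical
  set s : Set (EuclideanSpace ℝ (Fin 3)) := {(0 : EuclideanSpace ℝ (Fin 3))}ᶜ with hs
  have hsopen : IsOpen s := isOpen_compl_singleton
  have hsu : UniqueDiffOn ℝ s := hsopen.uniqueDiffOn
  let e : EuclideanSpace ℝ (Fin 3) ≃L[ℝ] EuclideanSpace ℝ (Fin 3) :=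
    (LinearEquiv.smulOfNeZero ℝ _ c hc).toContinuousLinearEquiv
  have he : ∀ x, e x = c • x := fun x => rfl
  have hpre : (e : EuclideanSpace ℝ (Fin 3) → EuclideanSpace ℝ (Fin 3)) ⁻¹' s = s := by
    ext x
    simp [hs, he, smul_eq_zero, hc]
  have hcζ : c • ζ ≠ 0 := smul_ne_zero hc hζ
  have hmem : e ζ ∈ s := by rw [he]; exact hcζ
  have hcomp := e.iteratedFDerivWithin_comp_right f hsu hmem m
  rw [hpre] at hcomp
  have hfe : (f ∘ e) = A • f := by
    funext x
    simp [he, hA x, smul_eq_mul]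
  have hsmul : iteratedFDerivWithin ℝ m (A • f) s ζ = A • iteratedFDerivWithin ℝ m f s ζ :=
    iteratedFDerivWithin_const_smul_apply (hfd ζ hζ) hsu hζ
  rw [hfe, hsmul] at hcomp
  have happ := congrArg (fun F => F v) hcomp
  simp only [ContinuousMultilinearMap.compContinuousLinearMap_apply,
    ContinuousMultilinearMap.smul_apply] at happ
  have hfun : (fun i : Fin m => (e : EuclideanSpace ℝ (Fin 3) →L[ℝ] EuclideanSpace ℝ (Fin 3)) (v i))
      = fun i => (fun _ : Fin m => c) i • v i := funext fun i => he (v i)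
  rw [hfun, (iteratedFDerivWithin ℝ m f s (e ζ)).map_smul_univ (fun _ : Fin m => c) v] at happ
  have heζ : e ζ = c • ζ := he ζ
  rw [heζ] at happ
  have heq1 : iteratedFDerivWithin ℝ m f s (c • ζ) = iteratedFDeriv ℝ m f (c • ζ) :=
    iteratedFDerivWithin_of_isOpen m hsopen hcζ
  have heq2 : iteratedFDerivWithin ℝ m f s ζ = iteratedFDeriv ℝ m f ζ :=
    iteratedFDerivWithin_of_isOpen m hsopen hζ
  rw [heq1, heq2] at happ
  rw [Finset.prod_const, Finset.card_univ, Fintype.card_fin, smul_eq_mul, smul_eq_mul] at happ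
  exact happ.symm

theorem stmt_10 (α : Fin 3 → ℕ) (k : ℤ) (m : ℕ) (hm1 : 1 ≤ m)
    (hm : (m : ℤ) = (α 0 : ℤ) + (α 1 : ℤ) + (α 2 : ℤ) + 2 * k + 1)
    (f : EuclideanSpace ℝ (Fin 3) → ℝ)
    (hf : ∀ ζ : EuclideanSpace ℝ (Fin 3),
      f ζ = ζ 0 ^ α 0 * ζ 1 ^ α 1 * ζ 2 ^ α 2 * ‖ζ‖ ^ (2 * k - 1)) :
    ∀ ζ : EuclideanSpace ℝ (Fin 3), ζ ≠ 0 →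
      ∀ v : Fin m → EuclideanSpace ℝ (Fin 3),
        iteratedFDeriv ℝ m f (-ζ) v = -(iteratedFDeriv ℝ m f ζ v) ∧
        ∀ t : ℝ, 0 < t →
          iteratedFDeriv ℝ m f (t • ζ) v = t ^ (-2 : ℤ) * iteratedFDeriv ℝ m f ζ v := by
  intro ζ hζ v
  have hfd := contDiffOn_f α k (n := (m : ℕ∞)) f hf
  constructor
  · -- oddness
    have hA : ∀ x : EuclideanSpace ℝ (Fin 3),
        f ((-1 : ℝ) • x) = (-1 : ℝ) ^ (α 0 + α 1 + α 2) * f x := by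
      intro x
      have hcoord : ∀ i : Fin 3, ((-1 : ℝ) • x) i = -(x i) := fun i => by
        simp [PiLp.smul_apply]
      have hnorm : ‖(-1 : ℝ) • x‖ = ‖x‖ := by
        rw [norm_smul]; simp
      rw [hf, hf, hcoord 0, hcoord 1, hcoord 2, hnorm]
      rw [neg_pow, neg_pow, neg_pow, pow_add, pow_add]
      ring
    have hkey := key_hom m f hfd (-1) (by norm_num) _ hA ζ hζ v
    have hζ' : (-1 : ℝ) • ζ = -ζ := by simp
    rw [hζ'] at hkey
    have hodd : Odd (m + (α 0 + α 1 + α 2)) := by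
      have : (↑(m + (α 0 + α 1 + α 2)) : ℤ) = 2 * (m - k - 1) + 1 := by push_cast; linarith
      have : Odd ((↑(m + (α 0 + α 1 + α 2)) : ℤ)) := ⟨m - k - 1, by linarith⟩
      exact_mod_cast this
    have hsign : ((-1 : ℝ) ^ m) * ((-1 : ℝ) ^ (α 0 + α 1 + α 2)) = -1 := by
      rw [← pow_add]; exact hodd.neg_one_pow
    have hm2 : ((-1 : ℝ) ^ m) * ((-1 : ℝ) ^ m) = 1 := by
      rw [← pow_add]; exact Even.neg_one_pow ⟨m, rfl⟩
    calc iteratedFDeriv ℝ m f (-ζ) v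
        = ((-1:ℝ)^m * (-1:ℝ)^m) * iteratedFDeriv ℝ m f (-ζ) v := by rw [hm2, one_mul]
      _ = (-1:ℝ)^m * ((-1:ℝ)^(α 0 + α 1 + α 2) * iteratedFDeriv ℝ m f ζ v) := by
          rw [mul_assoc, hkey]
      _ = -(iteratedFDeriv ℝ m f ζ v) := by rw [← mul_assoc, hsign]; ring
  · -- homogeneity
    intro t ht
    have ht0 : t ≠ 0 := ne_of_gt ht
    have hA : ∀ x : EuclideanSpace ℝ (Fin 3),
        f (t • x) = t ^ ((m : ℤ) - 2) * f x := by
      intro x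
      have hcoord : ∀ i : Fin 3, (t • x) i = t * x i := fun i => by
        simp [PiLp.smul_apply, smul_eq_mul]
      have hnorm : ‖t • x‖ = t * ‖x‖ := by
        rw [norm_smul, Real.norm_eq_abs, abs_of_pos ht]
      rw [hf, hf, hcoord 0, hcoord 1, hcoord 2, hnorm, mul_pow, mul_pow, mul_pow, mul_zpow]
      have hexp : t ^ α 0 * t ^ α 1 * t ^ α 2 * t ^ (2 * k - 1) = t ^ ((m : ℤ) - 2) := by
        rw [← zpow_natCast t (α 0), ← zpow_natCast t (α 1), ← zpow_natCast t (α 2),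
          ← zpow_add₀ ht0, ← zpow_add₀ ht0, ← zpow_add₀ ht0]
        congr 1
        linarith
      rw [← hexp]; ring
    have hkey := key_hom m f hfd t ht0 _ hA ζ hζ v
    have htm : t ^ m ≠ 0 := pow_ne_zero _ ht0
    have : iteratedFDeriv ℝ m f (t • ζ) v
        = t ^ ((m : ℤ) - 2) / t ^ m * iteratedFDeriv ℝ m f ζ v := by
      field_simp at hkey ⊢
      linarith [hkey]
    rw [this]
    congr 1
    rw [← zpow_natCast t m, ← zpow_sub₀ ht0]
    congr 1
    ring
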